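/- Let Φ₁, Φ₂, Φ₃ ∈ [0, π/2] and r₁, r₂, r₃ > 0 be real numbers. Define ℓ₁ = arcosh(cosh r₂ cosh r₃ + sinh r₂ sinh r₃ cos Φ₁), ℓ₂ = arcosh(cosh r₃ cosh r₁ + sinh r₃ sinh r₁ cos Φ₂), ℓ₃ = arcosh(cosh r₁ cosh r₂ + sinh r₁ sinh r₂ cos Φ₃). Then ℓ₁, ℓ₂, ℓ₃ satisfy the strict triangle inequalities: ℓ₁ < ℓ₂ + ℓ₃, ℓ₂ < ℓ₃ + ℓ₁, and ℓ₃ < ℓ₁ + ℓ₂. -/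

import Mathlib

open Real

/-- The inverse hyperbolic cosine (on `[1, ∞)`). -/
noncomputable def arcosh (x : ℝ) : ℝ := Real.log (x + Real.sqrt (x ^ 2 - 1))

lemma arcosh_cosh {x : ℝ} (hx : 0 ≤ x) : _root_.arcosh (Real.cosh x) = x := by
  have h1 : Real.cosh x ^ 2 - 1 = Real.sinh x ^ 2 := by
    have := Real.cosh_sq x; linarith
  have h2 : Real.sqrt (Real.cosh x ^ 2 - 1) = Real.sinh x := by
    rw [h1, Real.sqrt_sq (Real.sinh_nonneg_iff.mpr hx)]
  rw [_root_.arcosh, h2, Real.cosh_add_sinh, Real.log_exp]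

lemma arcosh_lt_arcosh {x y : ℝ} (hx : 1 ≤ x) (hxy : x < y) : _root_.arcosh x < _root_.arcosh y := by
  have hs : Real.sqrt (x ^ 2 - 1) ≤ Real.sqrt (y ^ 2 - 1) :=
    Real.sqrt_le_sqrt (by nlinarith)
  exact Real.log_lt_log (by positivity) (by linarith)

lemma arcosh_le_arcosh {x y : ℝ} (hx : 1 ≤ x) (hxy : x ≤ y) : _root_.arcosh x ≤ _root_.arcosh y := by
  rcases eq_or_lt_of_le hxy with h | h
  · rw [h]
  · exact (_root_.arcosh_lt_arcosh hx h).le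

lemma key_bounds (Φ r s : ℝ) (hΦ : Φ ∈ Set.Icc 0 (π / 2)) (hr : 0 < r) (hs : 0 < s) :
    _root_.arcosh (Real.cosh r * Real.cosh s + Real.sinh r * Real.sinh s * Real.cos Φ) ≤ r + s ∧
    r < _root_.arcosh (Real.cosh r * Real.cosh s + Real.sinh r * Real.sinh s * Real.cos Φ) ∧
    s < _root_.arcosh (Real.cosh r * Real.cosh s + Real.sinh r * Real.sinh s * Real.cos Φ) := by
  obtain ⟨hΦ0, hΦ2⟩ := hΦ
  have hcos0 : 0 ≤ Real.cos Φ :=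
    Real.cos_nonneg_of_mem_Icc ⟨by linarith [Real.pi_pos], hΦ2⟩
  have hcos1 : Real.cos Φ ≤ 1 := Real.cos_le_one Φ
  have hsr : 0 < Real.sinh r := by rwa [Real.sinh_pos_iff]
  have hss : 0 < Real.sinh s := by rwa [Real.sinh_pos_iff]
  have hcr : 1 < Real.cosh r := Real.one_lt_cosh.mpr hr.ne'
  have hcs : 1 < Real.cosh s := Real.one_lt_cosh.mpr hs.ne'
  have hA1 : (1:ℝ) ≤ Real.cosh r * Real.cosh s + Real.sinh r * Real.sinh s * Real.cos Φ := by
    nlinarith [mul_nonneg (mul_nonneg hsr.le hss.le) hcos0]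
  refine ⟨?_, ?_, ?_⟩
  · have h1 : Real.cosh r * Real.cosh s + Real.sinh r * Real.sinh s * Real.cos Φ ≤
        Real.cosh (r + s) := by
      rw [Real.cosh_add]; nlinarith [mul_pos hsr hss]
    calc _root_.arcosh _ ≤ _root_.arcosh (Real.cosh (r + s)) := _root_.arcosh_le_arcosh hA1 h1
      _ = r + s := _root_.arcosh_cosh (by linarith)
  · have h1 : Real.cosh r < Real.cosh r * Real.cosh s + Real.sinh r * Real.sinh s * Real.cos Φ := by
      nlinarith [mul_nonneg (mul_nonneg hsr.le hss.le) hcos0]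
    calc r = _root_.arcosh (Real.cosh r) := (_root_.arcosh_cosh hr.le).symm
      _ < _root_.arcosh _ := _root_.arcosh_lt_arcosh (Real.one_le_cosh r) h1
  · have h1 : Real.cosh s < Real.cosh r * Real.cosh s + Real.sinh r * Real.sinh s * Real.cos Φ := by
      nlinarith [mul_nonneg (mul_nonneg hsr.le hss.le) hcos0]
    calc s = _root_.arcosh (Real.cosh s) := (_root_.arcosh_cosh hs.le).symm
      _ < _root_.arcosh _ := _root_.arcosh_lt_arcosh (Real.one_le_cosh s) h1

/-- Hyperbolic case of Thurston's Lemma 2.1: the hyperbolic distances between the centers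
of three hyperbolic circles of radii `r₁, r₂, r₃` meeting at exterior angles
`Φ₁, Φ₂, Φ₃ ∈ [0, π/2]` satisfy the strict triangle inequalities. -/
theorem hyperbolic_circle_packing_triangle_ineq
    (Φ₁ Φ₂ Φ₃ r₁ r₂ r₃ : ℝ)
    (hΦ₁ : Φ₁ ∈ Set.Icc 0 (π / 2)) (hΦ₂ : Φ₂ ∈ Set.Icc 0 (π / 2))
    (hΦ₃ : Φ₃ ∈ Set.Icc 0 (π / 2))
    (hr₁ : 0 < r₁) (hr₂ : 0 < r₂) (hr₃ : 0 < r₃)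
    (ℓ₁ ℓ₂ ℓ₃ : ℝ)
    (hℓ₁ : ℓ₁ = _root_.arcosh (Real.cosh r₂ * Real.cosh r₃ + Real.sinh r₂ * Real.sinh r₃ * Real.cos Φ₁))
    (hℓ₂ : ℓ₂ = _root_.arcosh (Real.cosh r₃ * Real.cosh r₁ + Real.sinh r₃ * Real.sinh r₁ * Real.cos Φ₂))
    (hℓ₃ : ℓ₃ = _root_.arcosh (Real.cosh r₁ * Real.cosh r₂ + Real.sinh r₁ * Real.sinh r₂ * Real.cos Φ₃)) :
    ℓ₁ < ℓ₂ + ℓ₃ ∧ ℓ₂ < ℓ₃ + ℓ₁ ∧ ℓ₃ < ℓ₁ + ℓ₂ := by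
  obtain ⟨h1a, h1b, h1c⟩ := key_bounds Φ₁ r₂ r₃ hΦ₁ hr₂ hr₃
  obtain ⟨h2a, h2b, h2c⟩ := key_bounds Φ₂ r₃ r₁ hΦ₂ hr₃ hr₁
  obtain ⟨h3a, h3b, h3c⟩ := key_bounds Φ₃ r₁ r₂ hΦ₃ hr₁ hr₂
  rw [hℓ₁, hℓ₂, hℓ₃]
  refine ⟨by linarith, by linarith, by linarith⟩
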